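/- The set of all closed classes of graphs has the cardinality of the continuum. -/

import Mathlib

/-- A finite multigraph: vertices, edges, and an endpoint map assigning to each
edge an unordered pair of vertices (loops and parallel edges allowed). -/
structure MultiGraph where
  V : Type
  E : Type
  [fintV : Fintype V]
  [fintE : Fintype E]
  [decV : DecidableEq V]
  ends : E → Sym2 V

attribute [instance] MultiGraph.fintV MultiGraph.fintE MultiGraph.decV

/-- An embedding of the multigraph `G` into the multigraph `H` (a subgraph copy). -/
structure Emb (G H : MultiGraph) where
  vmap : G.V → H.V
  emap : G.E → H.E
  vinj : Function.Injective vmap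
  einj : Function.Injective emap
  ends_eq : ∀ e, H.ends (emap e) = (G.ends e).map vmap

/-- An isomorphism of multigraphs. -/
structure Iso (G H : MultiGraph) extends Emb G H where
  vsurj : Function.Surjective vmap
  esurj : Function.Surjective emap

/-- `GlueAt G G₁ G₂ Gt j₁ j₂ f₁ f₂` says that `G` is the result of a gluing
operation applied to `G₁` and `G₂`, identifying the copy `j₁` of `Gt` inside `G₁`
with the copy `j₂` of `Gt` inside `G₂`: `f₁`, `f₂` embed the operands into the
result, they agree exactly on the identified subgraph, and together they cover `G`. -/
def GlueAt (G G₁ G₂ Gt : MultiGraph) (j₁ : Emb Gt G₁) (j₂ : Emb Gt G₂)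
    (f₁ : Emb G₁ G) (f₂ : Emb G₂ G) : Prop :=
  (∀ x, f₁.vmap (j₁.vmap x) = f₂.vmap (j₂.vmap x)) ∧
  (∀ e, f₁.emap (j₁.emap e) = f₂.emap (j₂.emap e)) ∧
  (∀ v, (∃ a, f₁.vmap a = v) ∨ (∃ b, f₂.vmap b = v)) ∧
  (∀ e, (∃ a, f₁.emap a = e) ∨ (∃ b, f₂.emap b = e)) ∧
  (∀ a b, f₁.vmap a = f₂.vmap b → ∃ x, j₁.vmap x = a ∧ j₂.vmap x = b) ∧
  (∀ a b, f₁.emap a = f₂.emap b → ∃ x, j₁.emap x = a ∧ j₂.emap x = b)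

/-- `G` is a result of a gluing operation applied to `G₁` and `G₂` with gluing
subgraph `Gt`. -/
def IsGluing (G G₁ G₂ Gt : MultiGraph) : Prop :=
  ∃ (j₁ : Emb Gt G₁) (j₂ : Emb Gt G₂) (f₁ : Emb G₁ G) (f₂ : Emb G₂ G),
    GlueAt G G₁ G₂ Gt j₁ j₂ f₁ f₂

/-- A nontrivial gluing: neither identified subgraph is the whole operand. -/
def IsNontrivialGluing (G G₁ G₂ Gt : MultiGraph) : Prop :=
  ∃ (j₁ : Emb Gt G₁) (j₂ : Emb Gt G₂) (f₁ : Emb G₁ G) (f₂ : Emb G₂ G),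
    GlueAt G G₁ G₂ Gt j₁ j₂ f₁ f₂ ∧
    ¬ (Function.Surjective j₁.vmap ∧ Function.Surjective j₁.emap) ∧
    ¬ (Function.Surjective j₂.vmap ∧ Function.Surjective j₂.emap)

/-- `O n`: the empty (edgeless) graph on `n` vertices. -/
abbrev O (n : ℕ) : MultiGraph := { V := Fin n, E := Empty, ends := fun e => e.elim }

/-- `K₂`: a single edge on two vertices. -/
abbrev K2 : MultiGraph := { V := Fin 2, E := Fin 1, ends := fun _ => s((0 : Fin 2), (1 : Fin 2)) }

/-- `CycleG n`: the simple cycle on `n` vertices (`CycleG 1` is a loop,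
`CycleG 2` a pair of parallel edges). -/
def CycleG (n : ℕ) : MultiGraph :=
  { V := Fin n, E := Fin n,
    ends := fun e => s(e, ⟨(e.val + 1) % n, Nat.mod_lt _ e.pos⟩) }

/-- `C₁`: a single vertex with a loop. -/
abbrev C1 : MultiGraph := CycleG 1

/-- Number of occurrences of `v` among the two endpoints in an unordered pair. -/
def vcount {α : Type} [DecidableEq α] (v : α) : Sym2 α → ℕ :=
  Sym2.lift ⟨fun a b => (if a = v then 1 else 0) + (if b = v then 1 else 0),
    fun _ _ => add_comm _ _⟩

/-- Degree of a vertex in a multigraph (a loop contributes 2). -/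
def MultiGraph.degree (G : MultiGraph) (v : G.V) : ℕ := ∑ e : G.E, vcount v (G.ends e)

/-- Adjacency in a multigraph. -/
def MultiGraph.Adj (G : MultiGraph) (v w : G.V) : Prop := ∃ e, G.ends e = s(v, w)

/-- Connectivity of a multigraph. -/
def MultiGraph.Connected (G : MultiGraph) : Prop :=
  Nonempty G.V ∧ ∀ v w, Relation.ReflTransGen G.Adj v w

/-- A graph has a cycle iff it contains a subgraph isomorphic to some `CycleG n`,
`n ≥ 1` (this includes loops and pairs of parallel edges). -/
def HasCycle (G : MultiGraph) : Prop := ∃ n, 1 ≤ n ∧ Nonempty (Emb (CycleG n) G)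

/-- A Hamiltonian graph: it contains a spanning cycle. -/
def Hamiltonian (G : MultiGraph) : Prop :=
  ∃ n, 1 ≤ n ∧ ∃ f : Emb (CycleG n) G, Function.Surjective f.vmap

/-- The class of graphs constructible from (isomorphic copies of) graphs in `B`
by gluing operations whose gluing subgraphs lie in `T`. -/
inductive GeneratesW (B T : Set MultiGraph) : MultiGraph → Prop
  | base {H G : MultiGraph} : B H → Iso H G → GeneratesW B T G
  | glue {G G₁ G₂ Gt : MultiGraph} : GeneratesW B T G₁ → GeneratesW B T G₂ →
      T Gt → IsGluing G G₁ G₂ Gt → GeneratesW B T G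

/-- The closure of a set of graphs under arbitrary gluing operations. -/
def Generates (B : Set MultiGraph) : Set MultiGraph := {G | GeneratesW B Set.univ G}

/-- A class of graphs closed under isomorphism. -/
def IsoClosed (C : Set MultiGraph) : Prop := ∀ G H, G ∈ C → Iso G H → H ∈ C

/-- A closed class of graphs: closed under isomorphism and gluing operations. -/
def ClosedClass (C : Set MultiGraph) : Prop :=
  IsoClosed C ∧ ∀ G G₁ G₂ Gt, G₁ ∈ C → G₂ ∈ C → IsGluing G G₁ G₂ Gt → G ∈ C

open Function

def Emb.comp {G H K : MultiGraph} (f : Emb G H) (g : Emb H K) : Emb G K where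
  vmap := g.vmap ∘ f.vmap
  emap := g.emap ∘ f.emap
  vinj := g.vinj.comp f.vinj
  einj := g.einj.comp f.einj
  ends_eq := fun e => by
    simp only [Function.comp_apply, g.ends_eq, f.ends_eq, Sym2.map_map]

noncomputable def Iso.symm {G H : MultiGraph} (f : Iso G H) : Iso H G := by
  let ev : G.V ≃ H.V := Equiv.ofBijective f.vmap ⟨f.vinj, f.vsurj⟩
  let ee : G.E ≃ H.E := Equiv.ofBijective f.emap ⟨f.einj, f.esurj⟩
  refine ⟨⟨ev.symm, ee.symm, ev.symm.injective, ee.symm.injective, fun e => ?_⟩,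
    ev.symm.surjective, ee.symm.surjective⟩
  have h1 : H.ends (f.emap (ee.symm e)) = (G.ends (ee.symm e)).map f.vmap := f.ends_eq _
  have h2 : f.emap (ee.symm e) = e := ee.apply_symm_apply e
  rw [h2] at h1
  rw [h1, Sym2.map_map]
  have : (ev.symm ∘ f.vmap) = id := by
    funext x; exact ev.symm_apply_apply x
  rw [this, Sym2.map_id]
  rfl

def Iso.comp {G H K : MultiGraph} (f : Iso G H) (g : Iso H K) : Iso G K :=
  ⟨f.toEmb.comp g.toEmb, g.vsurj.comp f.vsurj, g.esurj.comp f.esurj⟩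

lemma vcount_mk {α : Type} [DecidableEq α] (v a b : α) :
    vcount v s(a, b) = (if a = v then 1 else 0) + (if b = v then 1 else 0) := rfl

lemma vcount_map {α β : Type} [DecidableEq α] [DecidableEq β] {f : α → β}
    (hf : Function.Injective f) (v : α) (s : Sym2 α) :
    vcount (f v) (s.map f) = vcount v s := by
  induction s using Sym2.ind with
  | _ a b => simp [Sym2.map_pair_eq, vcount_mk, hf.eq_iff]

lemma Emb.degree_le {G H : MultiGraph} (f : Emb G H) (v : G.V) :
    G.degree v ≤ H.degree (f.vmap v) := by
  classical
  have h1 : G.degree v = ∑ e : G.E, vcount (f.vmap v) (H.ends (f.emap e)) := by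
    unfold MultiGraph.degree
    refine Finset.sum_congr rfl fun e _ => ?_
    rw [f.ends_eq, vcount_map f.vinj]
  rw [h1]
  have h2 : ∑ e : G.E, vcount (f.vmap v) (H.ends (f.emap e))
      = ∑ e ∈ Finset.univ.image f.emap, vcount (f.vmap v) (H.ends e) := by
    rw [Finset.sum_image (fun a _ b _ h => f.einj h)]
  rw [h2]
  exact Finset.sum_le_sum_of_subset (Finset.subset_univ _)
lemma cycle_ends {n : ℕ} [NeZero n] (e : Fin n) : (CycleG n).ends e = s(e, e + 1) := by
  have h : (⟨(e.val + 1) % n, Nat.mod_lt _ e.pos⟩ : Fin n) = e + 1 := by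
    apply Fin.ext
    simp [Fin.add_def, Fin.val_one', Nat.add_mod, Nat.mod_eq_of_lt e.isLt]
  show s(e, _) = _
  rw [h]

lemma degree_cycle {n : ℕ} [NeZero n] (v : Fin n) : (CycleG n).degree v = 2 := by
  unfold MultiGraph.degree
  have h : ∀ e : Fin n, vcount v ((CycleG n).ends e)
      = (if e = v then 1 else 0) + (if e = v - 1 then 1 else 0) := by
    intro e
    rw [cycle_ends, vcount_mk]
    congr 1
    simp only [← eq_sub_iff_add_eq]
  refine (Finset.sum_congr rfl (fun e _ => h e)).trans
    (?_ : ∑ e : Fin n, ((if e = v then 1 else 0) + if e = v - 1 then 1 else 0) = 2)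
  rw [Finset.sum_add_distrib]
  simp [Finset.sum_ite_eq']

lemma cycle_iso_eq {a b : ℕ} (f : Iso (CycleG a) (CycleG b)) : a = b := by
  have h := Fintype.card_of_bijective (⟨f.vinj, f.vsurj⟩ : Function.Bijective f.vmap)
  exact Fin.equiv_iff_eq.mp ⟨Equiv.ofBijective f.vmap ⟨f.vinj, f.vsurj⟩⟩
open Fin.NatCast in
lemma emb_cycle_surj {m : ℕ} {G : MultiGraph} (hne : Nonempty G.V)
    (hdeg : ∀ v, 2 ≤ G.degree v) (f : Emb G (CycleG m)) :
    Function.Surjective f.vmap ∧ Function.Surjective f.emap := by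
  classical
  haveI : NeZero m := ⟨by rintro rfl; exact (f.vmap hne.some).elim0⟩
  let F : G.V → Fin m := f.vmap
  let Fe : G.E → Fin m := f.emap
  have hFinj : Function.Injective F := f.vinj
  have hFeinj : Function.Injective Fe := f.einj
  have hends : ∀ e, (CycleG m).ends (Fe e) = Sym2.map F (G.ends e) := f.ends_eq
  have hdeg2 : ∀ v : G.V, G.degree v = 2 := fun v =>
    le_antisymm (le_trans (f.degree_le v) (le_of_eq (degree_cycle (F v)))) (hdeg v)
  have hcov : ∀ (v : G.V) (e : Fin m), vcount (F v) ((CycleG m).ends e) ≠ 0 →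
      ∃ e', Fe e' = e := by
    intro v e he
    by_contra hc
    push_neg at hc
    have himg : e ∉ Finset.univ.image Fe := by
      simp only [Finset.mem_image, Finset.mem_univ, true_and, not_exists]
      exact fun e' => hc e'
    have h1 : ∑ e' ∈ Finset.univ.image Fe, vcount (F v) ((CycleG m).ends e') = 2 := by
      rw [Finset.sum_image (fun a _ b _ h => hFeinj h), ← hdeg2 v]
      unfold MultiGraph.degree
      refine Finset.sum_congr rfl fun e' _ => ?_
      rw [hends, vcount_map hFinj]
    have h2 : ∑ e' : Fin m, vcount (F v) ((CycleG m).ends e') = 2 := by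
      have h := degree_cycle (F v)
      unfold MultiGraph.degree at h
      exact h
    have hle : ∑ e' ∈ insert e (Finset.univ.image Fe), vcount (F v) ((CycleG m).ends e')
        ≤ ∑ e' : Fin m, vcount (F v) ((CycleG m).ends e') :=
      Finset.sum_le_sum_of_subset (Finset.subset_univ _)
    rw [Finset.sum_insert himg, h1, h2] at hle
    omega
  have hstep : ∀ v : G.V, ∃ w : G.V, F w = F v + 1 := by
    intro v
    have he : vcount (F v) ((CycleG m).ends (F v)) ≠ 0 := by
      rw [cycle_ends (F v), vcount_mk]
      simp
    obtain ⟨e', he'⟩ := hcov v (F v) he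
    have h := hends e'
    rw [he', cycle_ends (F v)] at h
    have hrep : ∃ a b, G.ends e' = s(a, b) := by
      induction G.ends e' using Sym2.ind with | _ a b => exact ⟨a, b, rfl⟩
    obtain ⟨a, b, hab⟩ := hrep
    rw [hab, Sym2.map_pair_eq] at h
    obtain h := Sym2.eq_iff.mp h
    rcases h with ⟨-, h2⟩ | ⟨-, h2⟩
    · exact ⟨b, h2.symm⟩
    · exact ⟨a, h2.symm⟩
  have hiter : ∀ k : ℕ, ∃ w, F w = F hne.some + (k : Fin m) := by
    intro k
    induction k with
    | zero => exact ⟨hne.some, by simp⟩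
    | succ k ih =>
      obtain ⟨w, hw⟩ := ih
      obtain ⟨w', hw'⟩ := hstep w
      refine ⟨w', ?_⟩
      rw [hw', hw]
      rw [add_assoc]
      exact congrArg _ (Nat.cast_succ k).symm
  have vsurjF : Function.Surjective F := by
    intro u
    obtain ⟨w, hw⟩ := hiter (u - F hne.some).val
    refine ⟨w, ?_⟩
    rw [hw, Fin.cast_val_eq_self, add_comm, sub_add_cancel]
  have esurjF : Function.Surjective Fe := by
    intro e
    obtain ⟨v, hv⟩ := vsurjF e
    apply hcov v e
    rw [hv, cycle_ends e, vcount_mk]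
    simp
  exact ⟨vsurjF, esurjF⟩
/-- The closed class associated with a set of natural numbers. -/
def CC (S : Set ℕ) : Set MultiGraph :=
  {G | Nonempty G.V ∧ (∀ v, 2 ≤ G.degree v) ∧
    ∀ k : ℕ, Nonempty (Iso (CycleG (k + 1)) G) → k ∈ S}

lemma closedClass_CC (S : Set ℕ) : ClosedClass (CC S) := by
  constructor
  · rintro G H ⟨hne, hdeg, hcyc⟩ f
    refine ⟨⟨f.vmap hne.some⟩, ?_, ?_⟩
    · intro w
      obtain ⟨v, rfl⟩ := f.vsurj w
      exact le_trans (hdeg v) (f.toEmb.degree_le v)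
    · rintro k ⟨ι⟩
      exact hcyc k ⟨ι.comp f.symm⟩
  · rintro G G₁ G₂ Gt ⟨hne₁, hdeg₁, hcyc₁⟩ ⟨hne₂, hdeg₂, hcyc₂⟩
      ⟨j₁, j₂, f₁, f₂, hv, he, hcovV, hcovE, hint⟩
    refine ⟨⟨f₁.vmap hne₁.some⟩, ?_, ?_⟩
    · intro v
      rcases hcovV v with ⟨a, rfl⟩ | ⟨b, rfl⟩
      · exact le_trans (hdeg₁ a) (f₁.degree_le a)
      · exact le_trans (hdeg₂ b) (f₂.degree_le b)
    · rintro k ⟨ι⟩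
      have g : Emb G₁ (CycleG (k + 1)) := f₁.comp ι.symm.toEmb
      obtain ⟨hvs, hes⟩ := emb_cycle_surj hne₁ hdeg₁ g
      exact hcyc₁ k ⟨(Iso.mk g hvs hes).symm⟩

lemma cycle_mem_CC_iff (S : Set ℕ) (k : ℕ) : CycleG (k + 1) ∈ CC S ↔ k ∈ S := by
  constructor
  · rintro ⟨-, -, hcyc⟩
    refine hcyc k ⟨⟨⟨id, id, fun _ _ h => h, fun _ _ h => h, fun e => ?_⟩,
      fun x => ⟨x, rfl⟩, fun x => ⟨x, rfl⟩⟩⟩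
    simp [Sym2.map_id]
  · intro hk
    refine ⟨⟨(0 : Fin (k+1))⟩, fun v => le_of_eq (degree_cycle v).symm, ?_⟩
    rintro j ⟨ι⟩
    have hjk : j = k := Nat.succ_injective (cycle_iso_eq ι)
    rwa [hjk]

lemma CC_injective : Function.Injective CC := by
  intro S S' h
  ext k
  rw [← cycle_mem_CC_iff S k, h, cycle_mem_CC_iff]
/-- Codes for canonical forms of multigraphs. -/
abbrev GCode : Type := Σ n : ℕ, Σ m : ℕ, Fin m → Sym2 (Fin n)

/-- The multigraph encoded by a code. -/
def decode (c : GCode) : MultiGraph := { V := Fin c.1, E := Fin c.2.1, ends := c.2.2 }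

instance : Countable GCode := inferInstance

lemma exists_code (G : MultiGraph) : ∃ c : GCode, Nonempty (Iso G (decode c)) := by
  let eV := Fintype.equivFin G.V
  let eE := Fintype.equivFin G.E
  refine ⟨⟨Fintype.card G.V, Fintype.card G.E, fun e => (G.ends (eE.symm e)).map eV⟩,
    ⟨⟨⟨eV, eE, eV.injective, eE.injective, fun e => ?_⟩, eV.surjective, eE.surjective⟩⟩⟩
  show (G.ends (eE.symm (eE e))).map eV = (G.ends e).map eV
  rw [Equiv.symm_apply_apply]

theorem closedClasses_continuum' :
    Cardinal.mk {C : Set MultiGraph // ClosedClass C} = Cardinal.continuum := by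
  apply le_antisymm
  · have hinj : Function.Injective (fun C : {C : Set MultiGraph // ClosedClass C} =>
        {x : ULift.{1} GCode | decode x.down ∈ C.1}) := by
      intro C₁ C₂ h
      apply Subtype.ext
      ext G
      obtain ⟨c, ⟨ι⟩⟩ := exists_code G
      have h1 : G ∈ C₁.1 ↔ decode c ∈ C₁.1 :=
        ⟨fun hG => C₁.2.1 G (decode c) hG ι, fun hG => C₁.2.1 (decode c) G hG ι.symm⟩
      have h2 : G ∈ C₂.1 ↔ decode c ∈ C₂.1 :=
        ⟨fun hG => C₂.2.1 G (decode c) hG ι, fun hG => C₂.2.1 (decode c) G hG ι.symm⟩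
      have hc : decode c ∈ C₁.1 ↔ decode c ∈ C₂.1 := by
        have h' := congrArg (fun s => ULift.up.{1} c ∈ s) h
        simpa using h'
      show G ∈ C₁.1 ↔ G ∈ C₂.1
      rw [h1, hc, ← h2]
    calc Cardinal.mk {C : Set MultiGraph // ClosedClass C}
        ≤ Cardinal.mk (Set (ULift.{1} GCode)) := Cardinal.mk_le_of_injective hinj
      _ = 2 ^ Cardinal.mk (ULift.{1} GCode) := Cardinal.mk_set
      _ ≤ 2 ^ Cardinal.aleph0 :=
          Cardinal.power_le_power_left (by norm_num) Cardinal.mk_le_aleph0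
      _ = Cardinal.continuum := Cardinal.two_power_aleph0
  · have hinj : Function.Injective (fun S : Set (ULift.{1} ℕ) =>
        (⟨CC {k | ULift.up k ∈ S}, closedClass_CC _⟩ :
          {C : Set MultiGraph // ClosedClass C})) := by
      intro S S' h
      have h2 := CC_injective (congrArg Subtype.val h)
      ext ⟨k⟩
      have h3 := congrArg (fun T => k ∈ T) h2
      simpa using h3
    calc Cardinal.continuum = 2 ^ Cardinal.aleph0 := Cardinal.two_power_aleph0.symm
      _ = 2 ^ Cardinal.mk (ULift.{1} ℕ) := by rw [Cardinal.mk_denumerable]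
      _ = Cardinal.mk (Set (ULift.{1} ℕ)) := Cardinal.mk_set.symm
      _ ≤ _ := Cardinal.mk_le_of_injective hinj

/-- The set of all closed classes of graphs has the cardinality of the continuum. -/
theorem closedClasses_continuum :
    Cardinal.mk {C : Set MultiGraph // ClosedClass C} = Cardinal.continuum := by
  exact closedClasses_continuum'
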